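/- Let L : ℕ → ℚ[X] be the basic Laguerre polynomial sequence, defined by L_0 = 1, X·L_0 = -L_1, and for every k ≥ 1, X·L_k = -L_{k+1} + 2k·L_k - k(k-1)·L_{k-1}. Then for every n ≥ 1, as polynomials in ℚ[X], X^n = Σ_{k=1}^{n} C(n-1, k-1)·(n!/k!)·(-1)^k·L_k, where C(n-1,k-1) denotes the binomial coefficient. -/

import Mathlib

open Polynomial Finset

noncomputable def lagC (n k : ℕ) : ℚ :=
  if k = 0 then 0 else
    ((n - 1).choose (k - 1) : ℚ) * ((n.factorial : ℚ) / (k.factorial : ℚ)) * (-1) ^ k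

lemma lagC_zero (n : ℕ) : lagC n 0 = 0 := rfl

lemma lagC_top (n k : ℕ) (hn : 1 ≤ n) (h : n < k) : lagC n k = 0 := by
  rcases k with _ | k
  · rfl
  · simp [lagC, Nat.choose_eq_zero_of_lt (by omega : n - 1 < k)]

lemma natKey (p m : ℕ) :
    (p + 2) * (p + 1).choose (m + 1)
      = (m + 2) * (p.choose m + 2 * p.choose (m + 1) + p.choose (m + 2)) := by
  have h := Nat.add_one_mul_choose_eq (p + 1) (m + 1)
  norm_num at h
  rw [h]
  rw [Nat.choose_succ_succ (p+1) (m+1), Nat.choose_succ_succ p m, Nat.choose_succ_succ p (m+1)]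
  ring

lemma key (n j : ℕ) (hn : 1 ≤ n) :
    lagC (n + 1) j
      = -(lagC n (j - 1)) + 2 * j * lagC n j - (j + 1) * j * lagC n (j + 1) := by
  obtain ⟨p, rfl⟩ : ∃ p, n = p + 1 := ⟨n - 1, by omega⟩
  match j with
  | 0 => simp [lagC]
  | 1 =>
    simp only [lagC]
    norm_num [Nat.choose_one_right, Nat.factorial_succ]
    field_simp
    ring
  | (m+2) =>
    simp only [lagC]
    norm_num
    have h1 : ((m+1).factorial : ℚ) ≠ 0 := by positivity
    have h2 : ((m+2).factorial : ℚ) ≠ 0 := by positivity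
    have h3 : ((m+3).factorial : ℚ) ≠ 0 := by positivity
    have e2 : ((m+2).factorial : ℚ) = (m+2) * (m+1).factorial := by
      push_cast [Nat.factorial_succ]; ring
    have e3 : ((m+3).factorial : ℚ) = (m+3) * (m+2) * (m+1).factorial := by
      push_cast [Nat.factorial_succ]; ring
    have ef : ((p+2).factorial : ℚ) = (p+2) * (p+1).factorial := by
      push_cast [Nat.factorial_succ]; ring
    have hk : ((p + 2) * (p + 1).choose (m + 1) : ℚ)
        = (m + 2) * (p.choose m + 2 * p.choose (m + 1) + p.choose (m + 2)) := by
      exact_mod_cast congrArg (Nat.cast : ℕ → ℚ) (natKey p m)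
    rw [e2, e3, ef]
    have hm2 : ((m:ℚ)+2) ≠ 0 := by positivity
    have hm3 : ((m:ℚ)+3) ≠ 0 := by positivity
    field_simp
    linear_combination ((-1:ℚ)^m * ((m:ℚ)+3)) * hk

theorem monomial_laguerre_expansion (L : ℕ → Polynomial ℚ)
    (hL0 : L 0 = 1)
    (hL1 : X * L 0 = -L 1)
    (hLrec : ∀ k : ℕ, 1 ≤ k →
      X * L k = -L (k + 1) + C (2 * (k : ℚ)) * L k
        - C ((k : ℚ) * ((k : ℚ) - 1)) * L (k - 1)) :
    ∀ n : ℕ, 1 ≤ n →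
      (X : Polynomial ℚ) ^ n =
        ∑ k ∈ Icc 1 n,
          C (((n - 1).choose (k - 1) : ℚ) * ((n.factorial : ℚ) / (k.factorial : ℚ))
            * (-1) ^ k) * L k := by
  have main : ∀ n : ℕ, 1 ≤ n →
      (X : Polynomial ℚ) ^ n = ∑ k ∈ range (n + 1), C (lagC n k) * L k := by
    intro n hn
    induction n, hn using Nat.le_induction with
    | base =>
      have : lagC 1 1 = -1 := by norm_num [lagC]
      simp [Finset.sum_range_succ, lagC_zero, this, ← hL1, hL0]
    | succ n hn IH =>
      have step1 : (X : Polynomial ℚ) ^ (n + 1)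
          = ∑ k ∈ range (n + 1), C (lagC n k) * (X * L k) := by
        rw [pow_succ, IH, Finset.sum_mul]
        exact Finset.sum_congr rfl fun k _ => by ring
      have step2 : ∀ k ∈ range (n + 1),
          C (lagC n k) * (X * L k)
            = -(C (lagC n k) * L (k + 1)) + C (2 * (k:ℚ) * lagC n k) * L k
              - C ((k:ℚ) * ((k:ℚ) - 1) * lagC n k) * L (k - 1) := by
        intro k _
        rcases Nat.eq_zero_or_pos k with rfl | hk
        · simp [lagC_zero]
        · rw [hLrec k hk]
          simp only [C_mul]
          ring
      rw [step1, Finset.sum_congr rfl step2, Finset.sum_sub_distrib,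
        Finset.sum_add_distrib, Finset.sum_neg_distrib]
      have hA : (∑ j ∈ range (n + 2), C (lagC n (j - 1)) * L j)
          = ∑ k ∈ range (n + 1), C (lagC n k) * L (k + 1) := by
        rw [Finset.sum_range_succ']
        simp [lagC_zero]
      have hB : (∑ j ∈ range (n + 2), C (2 * (j:ℚ) * lagC n j) * L j)
          = ∑ k ∈ range (n + 1), C (2 * (k:ℚ) * lagC n k) * L k := by
        rw [Finset.sum_range_succ]
        simp [lagC_top n (n + 1) hn (by omega)]
      have hD : (∑ j ∈ range (n + 2), C (((j:ℚ) + 1) * (j:ℚ) * lagC n (j + 1)) * L j)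
          = ∑ k ∈ range (n + 1), C ((k:ℚ) * ((k:ℚ) - 1) * lagC n k) * L (k - 1) := by
        rw [Finset.sum_range_succ, lagC_top n (n + 2) hn (by omega),
          Finset.sum_range_succ, lagC_top n (n + 1) hn (by omega)]
        rw [Finset.sum_range_succ' _ n]
        simp only [lagC_zero, mul_zero, zero_mul, map_zero, add_zero, Nat.add_sub_cancel]
        refine Finset.sum_congr rfl fun i _ => ?_
        push_cast
        ring_nf
      have hT : ∀ j ∈ range (n + 2),
          C (lagC (n + 1) j) * L j
            = -(C (lagC n (j - 1)) * L j) + C (2 * (j:ℚ) * lagC n j) * L j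
              - C (((j:ℚ) + 1) * (j:ℚ) * lagC n (j + 1)) * L j := by
        intro j _
        rw [key n j hn]
        simp only [map_add, map_sub, map_neg, C_mul]
        ring
      rw [Finset.sum_congr rfl hT, Finset.sum_sub_distrib, Finset.sum_add_distrib,
        Finset.sum_neg_distrib, hA, hB, hD]
  intro n hn
  rw [main n hn]
  rw [show range (n+1) = insert 0 (Icc 1 n) by
    ext x; simp [Finset.mem_insert, Nat.lt_succ_iff]; omega]
  rw [Finset.sum_insert (by simp)]
  rw [lagC_zero]
  simp only [map_zero, zero_mul, zero_add]
  refine Finset.sum_congr rfl fun k hk => ?_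
  have hk1 : k ≠ 0 := by simp at hk; omega
  rw [lagC, if_neg hk1]
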